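/- Consider the controlled boat system on ℝ³ × ℝ³ with state (x, y, θ, ẋ, ẏ, θ̇), dynamics m ẍ = u sin θ + W¹, m ÿ = −u cos θ + W², I θ̈ = u, where W¹ = m d(sin²θ C¹ − sin θ cos θ C²)(q̇) and W² = m d(−sin θ cos θ C¹ + cos²θ C²)(q̇) for smooth functions C¹, C²: ℝ² → ℝ. With the feedback law û = −m θ̇ (cos θ ẋ + sin θ ẏ), the function φ(q, q̇) = sin θ ẋ − cos θ ẏ + cos θ C²(x, y) − sin θ C¹(x, y) is a first integral of the closed-loop system: its derivative along the closed-loop vector field Γ vanishes identically. -/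

import Mathlib

open Real

/-- For the controlled boat system `m ẍ = u sin θ + W¹`, `m ÿ = -u cos θ + W²`,
`I θ̈ = u` with `W¹ = m d(sin²θ C¹ - sin θ cos θ C²)(q̇)`,
`W² = m d(-sin θ cos θ C¹ + cos²θ C²)(q̇)`, and the feedback
`û = -m θ̇ (cos θ ẋ + sin θ ẏ)`, the function
`φ = sin θ ẋ - cos θ ẏ + cos θ C² - sin θ C¹` is a first integral of the closed-loop
system: its derivative along any solution curve vanishes identically. -/
theorem stmt10 (m I : ℝ) (hm : 0 < m) (hI : 0 < I)
    (C1 C2 : ℝ × ℝ → ℝ)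
    (x y θ vx vy vθ : ℝ → ℝ)
    (hx : Differentiable ℝ x) (hy : Differentiable ℝ y) (hθ : Differentiable ℝ θ)
    (hvx : Differentiable ℝ vx) (hvy : Differentiable ℝ vy) (hvθ : Differentiable ℝ vθ)
    (hC1 : Differentiable ℝ fun t => C1 (x t, y t))
    (hC2 : Differentiable ℝ fun t => C2 (x t, y t))
    -- the feedback control and the current-induced forces
    (u W1 W2 : ℝ → ℝ)
    (hu : ∀ t, u t = -m * vθ t * (cos (θ t) * vx t + sin (θ t) * vy t))
    (hW1 : ∀ t, W1 t = m * deriv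
      (fun s => sin (θ s) ^ 2 * C1 (x s, y s) - sin (θ s) * cos (θ s) * C2 (x s, y s)) t)
    (hW2 : ∀ t, W2 t = m * deriv
      (fun s => -(sin (θ s) * cos (θ s)) * C1 (x s, y s) + cos (θ s) ^ 2 * C2 (x s, y s)) t)
    -- the closed-loop dynamics
    (hdx : ∀ t, deriv x t = vx t) (hdy : ∀ t, deriv y t = vy t)
    (hdθ : ∀ t, deriv θ t = vθ t)
    (hdvx : ∀ t, deriv vx t = (u t * sin (θ t) + W1 t) / m)
    (hdvy : ∀ t, deriv vy t = (-(u t * cos (θ t)) + W2 t) / m)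
    (hdvθ : ∀ t, deriv vθ t = u t / I) :
    ∀ t, deriv (fun s => sin (θ s) * vx s - cos (θ s) * vy s
      + cos (θ s) * C2 (x s, y s) - sin (θ s) * C1 (x s, y s)) t = 0 := by
  intro t
  have hm0 : m ≠ 0 := ne_of_gt hm
  have hθd : HasDerivAt θ (vθ t) t := by
    have h := (hθ t).hasDerivAt; rwa [hdθ t] at h
  have hvxd : HasDerivAt vx ((u t * sin (θ t) + W1 t) / m) t := by
    have h := (hvx t).hasDerivAt; rwa [hdvx t] at h
  have hvyd : HasDerivAt vy ((-(u t * cos (θ t)) + W2 t) / m) t := by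
    have h := (hvy t).hasDerivAt; rwa [hdvy t] at h
  set D1 := deriv (fun s => C1 (x s, y s)) t with hD1
  set D2 := deriv (fun s => C2 (x s, y s)) t with hD2
  have hC1d : HasDerivAt (fun s => C1 (x s, y s)) D1 t := (hC1 t).hasDerivAt
  have hC2d : HasDerivAt (fun s => C2 (x s, y s)) D2 t := (hC2 t).hasDerivAt
  have hsin : HasDerivAt (fun s => sin (θ s)) (cos (θ t) * vθ t) t := hθd.sin
  have hcos : HasDerivAt (fun s => cos (θ s)) (-sin (θ t) * vθ t) t := hθd.cos
  -- compute W1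
  have hg1 : HasDerivAt (fun s => sin (θ s) ^ 2 * C1 (x s, y s)
      - sin (θ s) * cos (θ s) * C2 (x s, y s))
      ((2 * sin (θ t) ^ 1 * (cos (θ t) * vθ t)) * C1 (x t, y t) + sin (θ t) ^ 2 * D1
        - (((cos (θ t) * vθ t) * cos (θ t) + sin (θ t) * (-sin (θ t) * vθ t)) * C2 (x t, y t)
          + sin (θ t) * cos (θ t) * D2)) t :=
    ((hsin.pow 2).mul hC1d).sub ((hsin.mul hcos).mul hC2d)
  have hW1t : W1 t = m * ((2 * sin (θ t) ^ 1 * (cos (θ t) * vθ t)) * C1 (x t, y t)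
      + sin (θ t) ^ 2 * D1
      - (((cos (θ t) * vθ t) * cos (θ t) + sin (θ t) * (-sin (θ t) * vθ t)) * C2 (x t, y t)
        + sin (θ t) * cos (θ t) * D2)) := by rw [hW1 t, hg1.deriv]
  have hg2 : HasDerivAt (fun s => -(sin (θ s) * cos (θ s)) * C1 (x s, y s)
      + cos (θ s) ^ 2 * C2 (x s, y s))
      ((-((cos (θ t) * vθ t) * cos (θ t) + sin (θ t) * (-sin (θ t) * vθ t))) * C1 (x t, y t)
        + (-(sin (θ t) * cos (θ t))) * D1
        + ((2 * cos (θ t) ^ 1 * (-sin (θ t) * vθ t)) * C2 (x t, y t) + cos (θ t) ^ 2 * D2)) t :=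
    (((hsin.mul hcos).neg).mul hC1d).add ((hcos.pow 2).mul hC2d)
  have hW2t : W2 t = m * ((-((cos (θ t) * vθ t) * cos (θ t) + sin (θ t) * (-sin (θ t) * vθ t))) * C1 (x t, y t)
        + (-(sin (θ t) * cos (θ t))) * D1
        + ((2 * cos (θ t) ^ 1 * (-sin (θ t) * vθ t)) * C2 (x t, y t) + cos (θ t) ^ 2 * D2)) := by
    rw [hW2 t, hg2.deriv]
  have hφ : HasDerivAt (fun s => sin (θ s) * vx s - cos (θ s) * vy s
      + cos (θ s) * C2 (x s, y s) - sin (θ s) * C1 (x s, y s))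
      (((cos (θ t) * vθ t) * vx t + sin (θ t) * ((u t * sin (θ t) + W1 t) / m))
        - ((-sin (θ t) * vθ t) * vy t + cos (θ t) * ((-(u t * cos (θ t)) + W2 t) / m))
        + ((-sin (θ t) * vθ t) * C2 (x t, y t) + cos (θ t) * D2)
        - ((cos (θ t) * vθ t) * C1 (x t, y t) + sin (θ t) * D1)) t :=
    (((hsin.mul hvxd).sub (hcos.mul hvyd)).add (hcos.mul hC2d)).sub (hsin.mul hC1d)
  rw [hφ.deriv, hu t, hW1t, hW2t]
  have hpyth : sin (θ t) ^ 2 + cos (θ t) ^ 2 = 1 := sin_sq_add_cos_sq (θ t)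
  field_simp
  linear_combination ((-(vθ t) * (cos (θ t) * vx t + sin (θ t) * vy t)
    + vθ t * (cos (θ t) * C1 (x t, y t) + sin (θ t) * C2 (x t, y t))
    + sin (θ t) * D1 - cos (θ t) * D2)) * hpyth
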